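/- Let G be a digraph and let C1, C2 be two distinct maximal 2-vertex-connected subgraphs of G. Then the vertex sets of C1 and C2 share at most one vertex. -/

import Mathlib

variable {V : Type*}

/-- Reachability by a directed path staying inside the vertex set `C`. -/
def ReachIn (E : Set (V × V)) (C : Set V) (a b : V) : Prop :=
  Relation.ReflTransGen (fun p q => p ∈ C ∧ q ∈ C ∧ (p, q) ∈ E) a b

/-- The subgraph induced by `C` is strongly connected. -/
def StronglyConnIn (E : Set (V × V)) (C : Set V) : Prop :=
  ∀ a ∈ C, ∀ b ∈ C, ReachIn E C a b

/-- `C` induces a 2-vertex-connected subgraph: at least three vertices,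
strongly connected, and no strong articulation point. -/
def Is2VCS (E : Set (V × V)) (C : Set V) : Prop :=
  (∃ a ∈ C, ∃ b ∈ C, ∃ c ∈ C, a ≠ b ∧ a ≠ c ∧ b ≠ c) ∧
    StronglyConnIn E C ∧ ∀ x ∈ C, StronglyConnIn E (C \ {x})

/-- `C` induces a maximal 2-vertex-connected subgraph. -/
def IsMax2VCS (E : Set (V × V)) (C : Set V) : Prop :=
  Is2VCS E C ∧ ∀ D : Set V, C ⊂ D → ¬ Is2VCS E D

lemma ReachIn.mono {E : Set (V × V)} {C D : Set V} (h : C ⊆ D) {a b : V}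
    (hr : ReachIn E C a b) : ReachIn E D a b :=
  Relation.ReflTransGen.mono (r := fun p q => p ∈ C ∧ q ∈ C ∧ (p, q) ∈ E)
    (p := fun p q => p ∈ D ∧ q ∈ D ∧ (p, q) ∈ E) (fun _ _ ⟨hp, hq, he⟩ => ⟨h hp, h hq, he⟩) _ _ hr

/-- Union of two strongly connected sets sharing a vertex is strongly connected. -/
lemma sconn_union {E : Set (V × V)} {C D : Set V}
    (hC : StronglyConnIn E C) (hD : StronglyConnIn E D)
    (v : V) (hvC : v ∈ C) (hvD : v ∈ D) : StronglyConnIn E (C ∪ D) := by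
  have key : ∀ a ∈ C ∪ D, ReachIn E (C ∪ D) a v ∧ ReachIn E (C ∪ D) v a := by
    rintro a (ha | ha)
    · exact ⟨(hC a ha v hvC).mono Set.subset_union_left,
        (hC v hvC a ha).mono Set.subset_union_left⟩
    · exact ⟨(hD a ha v hvD).mono Set.subset_union_right,
        (hD v hvD a ha).mono Set.subset_union_right⟩
  intro a ha b hb
  exact (key a ha).1.trans (key b hb).2

lemma union_is2VCS {E : Set (V × V)} {C₁ C₂ : Set V}
    (h₁ : Is2VCS E C₁) (h₂ : Is2VCS E C₂)
    {u v : V} (hu : u ∈ C₁ ∩ C₂) (hv : v ∈ C₁ ∩ C₂) (huv : u ≠ v) :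
    Is2VCS E (C₁ ∪ C₂) := by
  obtain ⟨⟨a, ha, b, hb, c, hc, hab, hac, hbc⟩, hs₁, hr₁⟩ := h₁
  obtain ⟨-, hs₂, hr₂⟩ := h₂
  refine ⟨⟨a, Or.inl ha, b, Or.inl hb, c, Or.inl hc, hab, hac, hbc⟩,
    sconn_union hs₁ hs₂ u hu.1 hu.2, ?_⟩
  intro x hx
  -- pick a common vertex distinct from x
  obtain ⟨w, hw, hwx⟩ : ∃ w ∈ C₁ ∩ C₂, w ≠ x := by
    rcases eq_or_ne u x with rfl | h
    · exact ⟨v, hv, fun h => huv h.symm⟩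
    · exact ⟨u, hu, h⟩
  have s₁ : StronglyConnIn E (C₁ \ {x}) := by
    by_cases hx1 : x ∈ C₁
    · exact hr₁ x hx1
    · have : C₁ \ {x} = C₁ := Set.diff_singleton_eq_self hx1
      rw [this]; exact hs₁
  have s₂ : StronglyConnIn E (C₂ \ {x}) := by
    by_cases hx2 : x ∈ C₂
    · exact hr₂ x hx2
    · have : C₂ \ {x} = C₂ := Set.diff_singleton_eq_self hx2
      rw [this]; exact hs₂
  have heq : (C₁ ∪ C₂) \ {x} = (C₁ \ {x}) ∪ (C₂ \ {x}) := Set.union_diff_distrib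
  rw [heq]
  exact sconn_union s₁ s₂ w ⟨hw.1, hwx⟩ ⟨hw.2, hwx⟩

theorem stmt15 [Fintype V] (E : Set (V × V)) (C₁ C₂ : Set V)
    (h₁ : IsMax2VCS E C₁) (h₂ : IsMax2VCS E C₂) (hne : C₁ ≠ C₂) :
    (C₁ ∩ C₂).Subsingleton := by
  by_contra h
  rw [Set.not_subsingleton_iff] at h
  obtain ⟨u, hu, v, hv, huv⟩ := h
  have hU : Is2VCS E (C₁ ∪ C₂) := union_is2VCS h₁.1 h₂.1 hu hv huv
  by_cases hsub : C₂ ⊆ C₁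
  · exact h₂.2 C₁ (hsub.ssubset_of_ne (Ne.symm hne)) h₁.1
  · have : C₁ ⊂ C₁ ∪ C₂ := by
      refine ⟨Set.subset_union_left, ?_⟩
      intro hle
      exact hsub (Set.union_subset_iff.mp hle).2
    exact h₁.2 _ this hU
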